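/- Let 0 ≤ X ≤ Y be positive semidefinite matrices and F a projection commuting with X. Then for all p > 1, Tr(F X^p F) ≤ Tr(F Y^p F). -/

import Mathlib

open Matrix ComplexOrder

/-- Apply a real function to a Hermitian matrix via the spectral decomposition. -/
noncomputable def hermFun {n : ℕ} {C : Matrix (Fin n) (Fin n) ℂ} (hC : C.IsHermitian)
    (f : ℝ → ℝ) : Matrix (Fin n) (Fin n) ℂ :=
  (hC.eigenvectorUnitary : Matrix (Fin n) (Fin n) ℂ) *
    Matrix.diagonal (fun i => (f (hC.eigenvalues i) : ℂ)) *
    (star (hC.eigenvectorUnitary : Matrix (Fin n) (Fin n) ℂ))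

namespace TraceProjAux

variable {n : ℕ}

lemma quadform (U : Matrix (Fin n) (Fin n) ℂ) (hU : U ∈ Matrix.unitaryGroup (Fin n) ℂ)
    (d : Fin n → ℝ) (w : Fin n → ℂ) :
    star w ⬝ᵥ ((U * Matrix.diagonal (fun i => (d i : ℂ)) * star U) *ᵥ w)
      = ((∑ i, d i * Complex.normSq ((star U *ᵥ w) i) : ℝ) : ℂ) := by
  set c := star U *ᵥ w with hc
  have h1 : star w ᵥ* U = star c := by
    rw [hc, star_mulVec, Matrix.star_eq_conjTranspose, conjTranspose_conjTranspose]
  rw [← Matrix.mulVec_mulVec, ← Matrix.mulVec_mulVec, Matrix.dotProduct_mulVec, h1]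
  push_cast
  simp only [dotProduct, Matrix.mulVec_diagonal, Pi.star_apply, Complex.star_def, ← hc]
  refine Finset.sum_congr rfl fun i _ => ?_
  rw [← Complex.mul_conj]
  ring

lemma hermFun_mulVec_eigen {C : Matrix (Fin n) (Fin n) ℂ} (hC : C.IsHermitian) (f : ℝ → ℝ)
    (w : Fin n → ℂ) (ν : ℝ) (hw : C *ᵥ w = (ν : ℂ) • w) :
    hermFun hC f *ᵥ w = ((f ν : ℝ) : ℂ) • w := by
  set U : Matrix (Fin n) (Fin n) ℂ := (hC.eigenvectorUnitary : Matrix (Fin n) (Fin n) ℂ) with hUdef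
  have hU1 : U * star U = 1 := (Matrix.mem_unitaryGroup_iff).mp hC.eigenvectorUnitary.2
  have hU2 : star U * U = 1 := (Matrix.mem_unitaryGroup_iff').mp hC.eigenvectorUnitary.2
  set c := star U *ᵥ w with hc
  have hUc : U *ᵥ c = w := by
    rw [hc, Matrix.mulVec_mulVec, hU1, Matrix.one_mulVec]
  have hdc : Matrix.diagonal (RCLike.ofReal ∘ hC.eigenvalues) *ᵥ c = (ν : ℂ) • c := by
    have hspec := hC.spectral_theorem
    have h1 : (U * Matrix.diagonal (RCLike.ofReal ∘ hC.eigenvalues) * star U) *ᵥ w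
        = (ν : ℂ) • w := by have hw' := hw; rw [hspec, Unitary.conjStarAlgAut_apply] at hw'; exact hw'
    have h2 := congrArg (fun v => star U *ᵥ v) h1
    simpa [Matrix.mulVec_mulVec, Matrix.mulVec_smul, ← Matrix.mul_assoc, hU2, hc,
      Matrix.one_mulVec] using h2
  have hkey : ∀ i, ((f (hC.eigenvalues i) : ℝ) : ℂ) * c i = ((f ν : ℝ) : ℂ) * c i := by
    intro i
    have h3 : ((hC.eigenvalues i : ℝ) : ℂ) * c i = (ν : ℂ) * c i := by
      have := congrFun hdc i
      simpa [Matrix.mulVec_diagonal] using this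
    rcases eq_or_ne (c i) 0 with h | h
    · simp [h]
    · have : ((hC.eigenvalues i : ℝ) : ℂ) = (ν : ℂ) := mul_right_cancel₀ h h3
      rw [Complex.ofReal_inj.mp this]
  have hdf : Matrix.diagonal (fun i => ((f (hC.eigenvalues i) : ℝ) : ℂ)) *ᵥ c
      = ((f ν : ℝ) : ℂ) • c := by
    funext i
    simpa [Matrix.mulVec_diagonal] using hkey i
  rw [hermFun, ← hUdef, ← Matrix.mulVec_mulVec, ← Matrix.mulVec_mulVec, ← hc, hdf,
    Matrix.mulVec_smul, hUc]

lemma hermFun_posSemidef {C : Matrix (Fin n) (Fin n) ℂ} (hC : C.IsHermitian) (f : ℝ → ℝ)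
    (hf : ∀ i, 0 ≤ f (hC.eigenvalues i)) : (hermFun hC f).PosSemidef := by
  have hd : (Matrix.diagonal (fun i => ((f (hC.eigenvalues i) : ℝ) : ℂ))).PosSemidef := by
    refine Matrix.posSemidef_diagonal_iff.mpr fun i => ?_
    simpa using Complex.zero_le_real.mpr (hf i)
  have := hd.mul_mul_conjTranspose_same (hC.eigenvectorUnitary : Matrix (Fin n) (Fin n) ℂ)
  simpa [hermFun, Matrix.star_eq_conjTranspose] using this

lemma trace_eq_sum_col (V : Matrix (Fin n) (Fin n) ℂ) (hV : V ∈ Matrix.unitaryGroup (Fin n) ℂ)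
    (M : Matrix (Fin n) (Fin n) ℂ) :
    Matrix.trace M = ∑ j, star (fun k => V k j) ⬝ᵥ (M *ᵥ fun k => V k j) := by
  have h1 : ∑ j, star (fun k => V k j) ⬝ᵥ (M *ᵥ fun k => V k j)
      = Matrix.trace (star V * (M * V)) := by
    simp only [Matrix.trace, Matrix.diag, Matrix.mul_apply, Matrix.mulVec, dotProduct,
      Pi.star_apply, Matrix.star_apply, Finset.mul_sum]
  rw [h1, Matrix.trace_mul_comm, Matrix.mul_assoc, Matrix.mem_unitaryGroup_iff.mp hV, mul_one]

end TraceProjAux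

theorem trace_proj_pow_mono {n : ℕ} (X Y F : Matrix (Fin n) (Fin n) ℂ)
    (hX : X.PosSemidef) (hY : Y.PosSemidef) (hXY : (Y - X).PosSemidef)
    (hFproj : F * F = F) (hFherm : F.IsHermitian) (hFX : F * X = X * F)
    (p : ℝ) (hp : 1 < p) :
    (Matrix.trace (F * hermFun hX.1 (fun t => t ^ p) * F)).re ≤
      (Matrix.trace (F * hermFun hY.1 (fun t => t ^ p) * F)).re := by
  classical
  set f : ℝ → ℝ := fun t => t ^ p with hfdef
  have hppos : (0:ℝ) < p := lt_trans one_pos hp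
  have hf0 : f 0 = 0 := Real.zero_rpow (ne_of_gt hppos)
  set Z := X * F with hZdef
  have hZF : F * Z = Z := by
    rw [hZdef, ← Matrix.mul_assoc, hFX, Matrix.mul_assoc, hFproj]
  have hZpsd : Z.PosSemidef := by
    have h := hX.mul_mul_conjTranspose_same F
    rw [hFherm.eq, hFX, Matrix.mul_assoc, hFproj] at h
    exact h
  set hZh : Z.IsHermitian := hZpsd.1 with hZhdef
  set V : Matrix (Fin n) (Fin n) ℂ := (hZh.eigenvectorUnitary : Matrix (Fin n) (Fin n) ℂ)
    with hVdef
  have hVmem : V ∈ Matrix.unitaryGroup (Fin n) ℂ := hZh.eigenvectorUnitary.2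
  set ν : Fin n → ℝ := hZh.eigenvalues with hνdef
  set wv : Fin n → Fin n → ℂ := fun j k => V k j with hwvdef
  have heig : ∀ j, Z *ᵥ wv j = ((ν j : ℝ) : ℂ) • wv j := by
    intro j
    have hZV : Z * V = V * Matrix.diagonal (RCLike.ofReal ∘ ν) := by
      conv_lhs => rw [hZh.spectral_theorem, Unitary.conjStarAlgAut_apply]
      rw [Matrix.mul_assoc, Matrix.mem_unitaryGroup_iff'.mp hVmem, mul_one]
    have hw : wv j = V *ᵥ Pi.single j 1 := by
      funext k
      simp [hwvdef, Matrix.mulVec, dotProduct, Pi.single_apply, Finset.sum_ite_eq]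
    rw [hw, Matrix.mulVec_mulVec, hZV, ← Matrix.mulVec_mulVec,
      Matrix.diagonal_mulVec_single]
    funext k
    simp [Matrix.mulVec, dotProduct, Pi.single_apply, Finset.sum_ite_eq, mul_comm]
  have hone : ∀ j, star (wv j) ⬝ᵥ wv j = 1 := by
    intro j
    have h : (star V * V) j j = (1 : Matrix (Fin n) (Fin n) ℂ) j j := by
      rw [Matrix.mem_unitaryGroup_iff'.mp hVmem]
    simp only [Matrix.mul_apply, Matrix.one_apply_eq, Matrix.star_apply] at h
    simpa [dotProduct, hwvdef] using h
  have hquad : ∀ (M : Matrix (Fin n) (Fin n) ℂ) (w : Fin n → ℂ),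
      star w ⬝ᵥ ((F * M * F) *ᵥ w) = star (F *ᵥ w) ⬝ᵥ (M *ᵥ (F *ᵥ w)) := by
    intro M w
    rw [← Matrix.mulVec_mulVec, ← Matrix.mulVec_mulVec, Matrix.dotProduct_mulVec]
    congr 1
    rw [star_mulVec, hFherm.eq]
  have hYdiag : ∀ (d : Fin n → ℝ) (w : Fin n → ℂ),
      star w ⬝ᵥ (((hY.1.eigenvectorUnitary : Matrix (Fin n) (Fin n) ℂ) *
        Matrix.diagonal (fun i => (d i : ℂ)) *
        star (hY.1.eigenvectorUnitary : Matrix (Fin n) (Fin n) ℂ)) *ᵥ w)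
      = ((∑ i, d i * Complex.normSq
          ((star (hY.1.eigenvectorUnitary : Matrix (Fin n) (Fin n) ℂ) *ᵥ w) i) : ℝ) : ℂ) :=
    fun d w => TraceProjAux.quadform _ hY.1.eigenvectorUnitary.2 d w
  rw [TraceProjAux.trace_eq_sum_col V hVmem, TraceProjAux.trace_eq_sum_col V hVmem,
    Complex.re_sum, Complex.re_sum]
  refine Finset.sum_le_sum fun j _ => ?_
  rw [hquad, hquad]
  rcases (hZpsd.eigenvalues_nonneg j).eq_or_lt with hν0 | hνpos
  · -- ν j = 0
    have hν0' : ν j = 0 := hν0.symm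
    have hXg : X *ᵥ (F *ᵥ wv j) = ((0:ℝ) : ℂ) • (F *ᵥ wv j) := by
      rw [Matrix.mulVec_mulVec, ← hZdef, heig j, hν0']
      simp
    have hXpg := TraceProjAux.hermFun_mulVec_eigen hX.1 f (F *ᵥ wv j) 0 hXg
    rw [hXpg, hf0]
    have hYppsd : (hermFun hY.1 f).PosSemidef :=
      TraceProjAux.hermFun_posSemidef hY.1 f
        (fun i => Real.rpow_nonneg (hY.eigenvalues_nonneg i) p)
    have h2 := hYppsd.dotProduct_mulVec_nonneg (F *ᵥ wv j)
    have h3 := (Complex.le_def.mp h2).1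
    simpa using h3
  · -- ν j > 0
    have hνpos' : 0 < ν j := hνpos
    have hFw : F *ᵥ wv j = wv j := by
      have h1 : F *ᵥ (Z *ᵥ wv j) = Z *ᵥ wv j := by rw [Matrix.mulVec_mulVec, hZF]
      rw [heig j, Matrix.mulVec_smul] at h1
      have hc : ((ν j : ℝ) : ℂ) ≠ 0 := by
        simpa using ne_of_gt hνpos'
      exact smul_right_injective (Fin n → ℂ) hc h1
    rw [hFw]
    have hXw : X *ᵥ wv j = ((ν j : ℝ) : ℂ) • wv j := by
      conv_lhs => rw [← hFw]
      rw [Matrix.mulVec_mulVec, ← hZdef, heig j]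
    -- LHS = f (ν j)
    have hL : (star (wv j) ⬝ᵥ (hermFun hX.1 f *ᵥ wv j)).re = f (ν j) := by
      rw [TraceProjAux.hermFun_mulVec_eigen hX.1 f (wv j) (ν j) hXw]
      simp [hone j]
    rw [hL]
    -- weights
    set U : Matrix (Fin n) (Fin n) ℂ := (hY.1.eigenvectorUnitary : Matrix (Fin n) (Fin n) ℂ)
    set a : Fin n → ℝ := fun i => Complex.normSq ((star U *ᵥ wv j) i) with hadef
    have hsuma : ∑ i, a i = 1 := by
      have h1 := hYdiag (fun _ => (1:ℝ)) (wv j)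
      have h2 : U * Matrix.diagonal (fun _ : Fin n => ((1:ℝ) : ℂ)) * star U = 1 := by
        simp [Matrix.diagonal_one, Matrix.mem_unitaryGroup_iff.mp hY.1.eigenvectorUnitary.2]
        exact Matrix.mem_unitaryGroup_iff.mp hY.1.eigenvectorUnitary.2
      rw [h2, Matrix.one_mulVec, hone j] at h1
      have := Complex.ofReal_inj.mp h1.symm
      simpa using this
    have hμa : (star (wv j) ⬝ᵥ (Y *ᵥ wv j)).re = ∑ i, hY.1.eigenvalues i * a i := by
      have h1 := hYdiag hY.1.eigenvalues (wv j)
      have h2 : Y = U * Matrix.diagonal (fun i => ((hY.1.eigenvalues i : ℝ) : ℂ)) * star U :=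
        hY.1.spectral_theorem
      rw [← h2] at h1
      rw [h1]
      simp
      rfl
    have hfa : (star (wv j) ⬝ᵥ (hermFun hY.1 f *ᵥ wv j)).re = ∑ i, f (hY.1.eigenvalues i) * a i := by
      have h1 := hYdiag (fun i => f (hY.1.eigenvalues i)) (wv j)
      rw [show hermFun hY.1 f = U * Matrix.diagonal (fun i => ((f (hY.1.eigenvalues i) : ℝ) : ℂ))
          * star U from rfl, h1]
      simp
      rfl
    rw [hfa]
    -- ν j ≤ ⟨w, Y w⟩
    have hXwre : (star (wv j) ⬝ᵥ (X *ᵥ wv j)).re = ν j := by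
      rw [hXw]
      simp [hone j]
    have hstep1 : ν j ≤ ∑ i, hY.1.eigenvalues i * a i := by
      have h0 := hXY.dotProduct_mulVec_nonneg (wv j)
      have h0' := (Complex.le_def.mp h0).1
      rw [Matrix.sub_mulVec, dotProduct_sub] at h0'
      have : (star (wv j) ⬝ᵥ (X *ᵥ wv j)).re ≤ (star (wv j) ⬝ᵥ (Y *ᵥ wv j)).re := by
        simpa [Complex.sub_re] using h0'
      rw [hXwre, hμa] at this
      exact this
    have hstep2 : f (ν j) ≤ f (∑ i, hY.1.eigenvalues i * a i) :=
      Real.rpow_le_rpow (le_of_lt hνpos') hstep1 (le_of_lt hppos)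
    refine le_trans hstep2 ?_
    have hjensen := (convexOn_rpow (le_of_lt hp)).map_sum_le
      (t := Finset.univ) (w := a) (p := hY.1.eigenvalues)
      (fun i _ => Complex.normSq_nonneg _) hsuma
      (fun i _ => Set.mem_Ici.mpr (hY.eigenvalues_nonneg i))
    calc f (∑ i, hY.1.eigenvalues i * a i)
        = f (∑ i, a i • hY.1.eigenvalues i) := by
          congr 1
          exact Finset.sum_congr rfl fun i _ => (mul_comm _ _)
      _ ≤ ∑ i, a i • f (hY.1.eigenvalues i) := hjensen
      _ = ∑ i, f (hY.1.eigenvalues i) * a i :=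
          Finset.sum_congr rfl fun i _ => (mul_comm _ _)
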